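/- For an ICC digraph D with k ≥ 2 Type-I paths, the removal of any set of at most k−2 vertices leaves at least one directed cycle; consequently MAIS(D) ≤ n − (k−1), where n is the number of vertices. -/

import Mathlib

/-- An ICC digraph with `k` Type-I paths. `n1 i ≥ 1` is the number of vertices of
Type-I path `P_i`; `n2 i j` is the number of vertices of Type-II path `P_{i,j}`
(`0` if empty, and `n2 i i = 0`); `q i j` (1-based, `1 ≤ q i j ≤ n1 j`) is the
index of the vertex of `P_j` that the arc leaving `P_{i,j}` (or, if `P_{i,j}` is
empty, the arc leaving the terminal vertex of `P_i`) points to. -/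
structure ICCDigraph (k : ℕ) where
  n1 : Fin k → ℕ
  hn1 : ∀ i, 1 ≤ n1 i
  n2 : Fin k → Fin k → ℕ
  hdiag : ∀ i, n2 i i = 0
  q : Fin k → Fin k → ℕ
  hq1 : ∀ i j, 1 ≤ q i j
  hq2 : ∀ i j, q i j ≤ n1 j

namespace ICCDigraph

variable {k : ℕ} (D : ICCDigraph k)

/-- The vertex set: vertices `v_{a+1}^i = ⟨i, a⟩` of Type-I paths (0-based `a`),
and vertices `v_{b+1}^{ij} = ⟨(i,j), b⟩` of Type-II paths. -/
abbrev Vtx : Type :=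
  (Σ i : Fin k, Fin (D.n1 i)) ⊕ (Σ p : Fin k × Fin k, Fin (D.n2 p.1 p.2))

/-- The terminal vertex `v_{n_i}^i` of Type-I path `P_i`. -/
def terminal (i : Fin k) : D.Vtx :=
  Sum.inl ⟨i, ⟨D.n1 i - 1, by have := D.hn1 i; omega⟩⟩

/-- The arc relation of the ICC digraph: arcs along Type-I and Type-II paths,
and the interconnecting arcs. -/
def Arc : D.Vtx → D.Vtx → Prop
  | Sum.inl ⟨i, a⟩, Sum.inl ⟨j, a'⟩ =>
      (i = j ∧ (a' : ℕ) = (a : ℕ) + 1) ∨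
      (i ≠ j ∧ (a : ℕ) = D.n1 i - 1 ∧ D.n2 i j = 0 ∧ (a' : ℕ) = D.q i j - 1)
  | Sum.inl ⟨i, a⟩, Sum.inr ⟨p, b⟩ =>
      i = p.1 ∧ (a : ℕ) = D.n1 i - 1 ∧ (b : ℕ) = 0
  | Sum.inr ⟨p, b⟩, Sum.inr ⟨p', b'⟩ =>
      p = p' ∧ (b' : ℕ) = (b : ℕ) + 1
  | Sum.inr ⟨p, b⟩, Sum.inl ⟨j, a⟩ =>
      p.2 = j ∧ (b : ℕ) = D.n2 p.1 p.2 - 1 ∧ (a : ℕ) = D.q p.1 p.2 - 1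

/-- A closed directed walk (cycle) starting and ending at `v`, visiting the
vertices `v :: l`. -/
def IsClosedWalk (v : D.Vtx) (l : List D.Vtx) : Prop :=
  List.Chain D.Arc v (l ++ [v])

/-- `S` induces an acyclic subdigraph: no directed cycle lies within `S`. -/
def AcyclicOn (S : Finset D.Vtx) : Prop :=
  ¬ ∃ (v : D.Vtx) (l : List D.Vtx), v ∈ S ∧ (∀ u ∈ l, u ∈ S) ∧ D.IsClosedWalk v l

open Classical in
/-- `MAIS(D)`: the maximum order of an acyclic induced subdigraph. -/
noncomputable def mais : ℕ :=
  (Finset.univ.filter fun S : Finset D.Vtx => D.AcyclicOn S).sup Finset.card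

/-- The message (1-based index `a`) of the `a`-th vertex of Type-I path `P_i`
(`0` if out of range). -/
def msgI {t : ℕ} (x : D.Vtx → Fin t → ZMod 2) (i : Fin k) (a : ℕ) :
    Fin t → ZMod 2 :=
  if h : 1 ≤ a ∧ a ≤ D.n1 i then x (Sum.inl ⟨i, ⟨a - 1, by omega⟩⟩) else 0

/-- The message (1-based index `b`) of the `b`-th vertex of Type-II path
`P_{i,j}` (`0` if out of range). -/
def msgII {t : ℕ} (x : D.Vtx → Fin t → ZMod 2) (i j : Fin k) (b : ℕ) :
    Fin t → ZMod 2 :=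
  if h : 1 ≤ b ∧ b ≤ D.n2 i j then x (Sum.inr ⟨(i, j), ⟨b - 1, by show b - 1 < D.n2 i j; omega⟩⟩) else 0

/-- Index set of the ICC code's codewords: the `n_i - 1` codewords along each
Type-I path, the `n_{ij} - 1` codewords along each Type-II path, one codeword per
nonempty Type-II path, and the single codeword `⊕ᵢ x_{n_i}^i`. -/
abbrev CodeIdx : Type :=
  (Σ i : Fin k, Fin (D.n1 i - 1)) ⊕
    ((Σ p : Fin k × Fin k, Fin (D.n2 p.1 p.2 - 1)) ⊕
      (({p : Fin k × Fin k // 1 ≤ D.n2 p.1 p.2}) ⊕ Unit))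

/-- The ICC code: `w_a^i = x_a^i ⊕ x_{a+1}^i`, `w_b^{ij} = x_b^{ij} ⊕ x_{b+1}^{ij}`,
`w_{n_{ij}}^{ij} = x_{n_{ij}}^{ij} ⊕ x_{q_i}^j`, and `w' = ⊕ᵢ x_{n_i}^i`. -/
def code {t : ℕ} (x : D.Vtx → Fin t → ZMod 2) : D.CodeIdx → Fin t → ZMod 2
  | Sum.inl ⟨i, a⟩ => D.msgI x i ((a : ℕ) + 1) + D.msgI x i ((a : ℕ) + 2)
  | Sum.inr (Sum.inl ⟨p, b⟩) =>
      D.msgII x p.1 p.2 ((b : ℕ) + 1) + D.msgII x p.1 p.2 ((b : ℕ) + 2)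
  | Sum.inr (Sum.inr (Sum.inl ⟨p, _⟩)) =>
      D.msgII x p.1 p.2 (D.n2 p.1 p.2) + D.msgI x p.2 (D.q p.1 p.2)
  | Sum.inr (Sum.inr (Sum.inr _)) => ∑ i : Fin k, D.msgI x i (D.n1 i)

end ICCDigraph
namespace ICCAux

open ICCDigraph

variable {k : ℕ} (D : ICCDigraph k)

/-- Vertex `⟨i, a⟩` of a Type-I path, with clamping. -/
def vtxI (i : Fin k) (a : ℕ) : D.Vtx :=
  Sum.inl ⟨i, ⟨min a (D.n1 i - 1), by have := D.hn1 i; omega⟩⟩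

/-- Vertex `⟨(i,j), b⟩` of a Type-II path, with clamping (junk if empty). -/
def vtxII (i j : Fin k) (b : ℕ) : D.Vtx :=
  if h : 1 ≤ D.n2 i j then
    Sum.inr ⟨(i, j), ⟨min b (D.n2 i j - 1), by show min b (D.n2 i j - 1) < D.n2 i j; omega⟩⟩
  else vtxI D j 0

/-- The index of the Type-I terminal vertex every cycle through this vertex
must visit. -/
def tag : D.Vtx → Fin k
  | Sum.inl s => s.1
  | Sum.inr s => s.1.2

lemma tag_vtxI (i : Fin k) (a : ℕ) : tag D (vtxI D i a) = i := rfl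

lemma tag_vtxII (i j : Fin k) (b : ℕ) : tag D (vtxII D i j b) = j := by
  unfold vtxII; split <;> rfl

section Arcs

lemma arc_I_succ {i : Fin k} {a : ℕ} (h : a + 1 ≤ D.n1 i - 1) :
    D.Arc (vtxI D i a) (vtxI D i (a + 1)) := by
  rw [vtxI, vtxI]
  refine Or.inl ⟨rfl, ?_⟩
  show min (a + 1) (D.n1 i - 1) = min a (D.n1 i - 1) + 1
  omega

lemma arc_II_succ {i j : Fin k} {b : ℕ} (h : b + 1 ≤ D.n2 i j - 1) (hn : 1 ≤ D.n2 i j) :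
    D.Arc (vtxII D i j b) (vtxII D i j (b + 1)) := by
  simp only [vtxII, dif_pos hn]
  refine ⟨rfl, ?_⟩
  show min (b + 1) (D.n2 i j - 1) = min b (D.n2 i j - 1) + 1
  omega

lemma arc_term_to_II {i j : Fin k} (hn : 1 ≤ D.n2 i j) :
    D.Arc (vtxI D i (D.n1 i - 1)) (vtxII D i j 0) := by
  simp only [vtxI, vtxII, dif_pos hn]
  refine ⟨rfl, ?_, ?_⟩
  · show min (D.n1 i - 1) (D.n1 i - 1) = D.n1 i - 1
    omega
  · show min 0 (D.n2 i j - 1) = 0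
    omega

lemma arc_term_direct {i j : Fin k} (hij : i ≠ j) (h0 : D.n2 i j = 0) :
    D.Arc (vtxI D i (D.n1 i - 1)) (vtxI D j (D.q i j - 1)) := by
  rw [vtxI, vtxI]
  refine Or.inr ?_
  have h1 := D.hq1 i j
  have h2 := D.hq2 i j
  have h5 := D.hn1 j
  refine ⟨hij, ?_, h0, ?_⟩
  · show min (D.n1 i - 1) (D.n1 i - 1) = D.n1 i - 1
    omega
  · show min (D.q i j - 1) (D.n1 j - 1) = D.q i j - 1
    omega

lemma arc_II_to_I {i j : Fin k} (hn : 1 ≤ D.n2 i j) :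
    D.Arc (vtxII D i j (D.n2 i j - 1)) (vtxI D j (D.q i j - 1)) := by
  simp only [vtxI, vtxII, dif_pos hn]
  have h1 := D.hq1 i j
  have h2 := D.hq2 i j
  have h5 := D.hn1 j
  refine ⟨rfl, ?_, ?_⟩
  · show min (D.n2 i j - 1) (D.n2 i j - 1) = D.n2 i j - 1
    omega
  · show min (D.q i j - 1) (D.n1 j - 1) = D.q i j - 1
    omega

end Arcs

/-- The vertices of the canonical cycle through terminals `i` and `j`. -/
def cyc (i j : Fin k) (m : ℕ) : D.Vtx :=
  if m = 0 then vtxI D i (D.n1 i - 1)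
  else if m ≤ D.n2 i j then vtxII D i j (m - 1)
  else if m ≤ D.n2 i j + (D.n1 j - D.q i j + 1) then
    vtxI D j (D.q i j - 1 + (m - D.n2 i j - 1))
  else if m ≤ D.n2 i j + (D.n1 j - D.q i j + 1) + D.n2 j i then
    vtxII D j i (m - D.n2 i j - (D.n1 j - D.q i j + 1) - 1)
  else vtxI D i (D.q j i - 1 + (m - D.n2 i j - (D.n1 j - D.q i j + 1) - D.n2 j i - 1))

/-- Length of the canonical cycle. -/
def clen (i j : Fin k) : ℕ :=
  D.n2 i j + (D.n1 j - D.q i j + 1) + D.n2 j i + (D.n1 i - D.q j i + 1)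

lemma cyc_tag (i j : Fin k) (m : ℕ) :
    tag D (cyc D i j m) = i ∨ tag D (cyc D i j m) = j := by
  unfold cyc
  split
  · left; exact tag_vtxI D i _
  split
  · right; exact tag_vtxII D i j _
  split
  · right; exact tag_vtxI D j _
  split
  · left; exact tag_vtxII D j i _
  · left; exact tag_vtxI D i _

lemma cyc_zero (i j : Fin k) : cyc D i j 0 = vtxI D i (D.n1 i - 1) := rfl

lemma cyc_last (i j : Fin k) : cyc D i j (clen D i j) = vtxI D i (D.n1 i - 1) := by
  have h1 := D.hq1 i j
  have h2 := D.hq2 i j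
  have h3 := D.hq1 j i
  have h4 := D.hq2 j i
  unfold cyc clen
  rw [if_neg (by omega), if_neg (by omega), if_neg (by omega), if_neg (by omega)]
  congr 1
  omega

lemma cyc_step (i j : Fin k) (hij : i ≠ j) {m : ℕ} (hm : m < clen D i j) :
    D.Arc (cyc D i j m) (cyc D i j (m + 1)) := by
  have h1 := D.hq1 i j
  have h2 := D.hq2 i j
  have h3 := D.hq1 j i
  have h4 := D.hq2 j i
  have h5 := D.hn1 i
  have h6 := D.hn1 j
  set A := D.n2 i j with hA
  set B := D.n1 j - D.q i j + 1 with hB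
  set C := D.n2 j i with hC
  set E := D.n1 i - D.q j i + 1 with hE
  have hm' : m < A + B + C + E := hm
  clear hm
  rcases Nat.eq_zero_or_pos m with hm0 | hmpos
  · subst hm0
    rcases Nat.eq_zero_or_pos A with hA0 | hApos
    · rw [cyc_zero]
      show D.Arc _ (cyc D i j 1)
      unfold cyc
      rw [if_neg (by omega), if_neg (by omega), if_pos (by omega)]
      rw [show D.q i j - 1 + (1 - A - 1) = D.q i j - 1 by omega]
      exact arc_term_direct D hij hA0
    · rw [cyc_zero]
      show D.Arc _ (cyc D i j 1)
      unfold cyc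
      rw [if_neg (by omega), if_pos (by omega)]
      exact arc_term_to_II D hApos
  rcases lt_or_ge m A with hr | hr
  · -- 1 ≤ m, m+1 ≤ A : inside first bridge
    have e1 : cyc D i j m = vtxII D i j (m - 1) := by
      unfold cyc; rw [if_neg (by omega), if_pos (by omega)]
    have e2 : cyc D i j (m + 1) = vtxII D i j (m - 1 + 1) := by
      unfold cyc; rw [if_neg (by omega), if_pos (by omega)]
      congr 1; omega
    rw [e1, e2]
    exact arc_II_succ D (by omega) (by omega)
  rcases Nat.eq_or_lt_of_le hr with hr2 | hr2
  · -- m = A (≥ 1): bridge to path j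
    have hApos : 1 ≤ A := by omega
    have e1 : cyc D i j m = vtxII D i j (A - 1) := by
      unfold cyc; rw [if_neg (by omega), if_pos (by omega)]
      congr 1; omega
    have e2 : cyc D i j (m + 1) = vtxI D j (D.q i j - 1) := by
      unfold cyc; rw [if_neg (by omega), if_neg (by omega), if_pos (by omega)]
      congr 1; omega
    rw [e1, e2]
    exact arc_II_to_I D hApos
  rcases lt_or_ge m (A + B) with hr3 | hr3
  · -- A < m < A+B : inside path j
    have e1 : cyc D i j m = vtxI D j (D.q i j - 1 + (m - A - 1)) := by
      unfold cyc; rw [if_neg (by omega), if_neg (by omega), if_pos (by omega)]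
    have e2 : cyc D i j (m + 1) = vtxI D j (D.q i j - 1 + (m - A - 1) + 1) := by
      unfold cyc; rw [if_neg (by omega), if_neg (by omega), if_pos (by omega)]
      congr 1; omega
    rw [e1, e2]
    exact arc_I_succ D (by omega)
  rcases Nat.eq_or_lt_of_le hr3 with hr4 | hr4
  · -- m = A + B : at terminal j
    have e1 : cyc D i j m = vtxI D j (D.n1 j - 1) := by
      unfold cyc; rw [if_neg (by omega), if_neg (by omega), if_pos (by omega)]
      congr 1; omega
    rcases Nat.eq_zero_or_pos C with hC0 | hCpos
    · have e2 : cyc D i j (m + 1) = vtxI D i (D.q j i - 1) := by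
        unfold cyc; rw [if_neg (by omega), if_neg (by omega), if_neg (by omega),
          if_neg (by omega)]
        congr 1; omega
      rw [e1, e2]
      exact arc_term_direct D (Ne.symm hij) hC0
    · have e2 : cyc D i j (m + 1) = vtxII D j i 0 := by
        unfold cyc; rw [if_neg (by omega), if_neg (by omega), if_neg (by omega),
          if_pos (by omega)]
        congr 1; omega
      rw [e1, e2]
      exact arc_term_to_II D hCpos
  rcases lt_or_ge m (A + B + C) with hr5 | hr5
  · -- A+B < m < A+B+C : inside second bridge
    have e1 : cyc D i j m = vtxII D j i (m - A - B - 1) := by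
      unfold cyc; rw [if_neg (by omega), if_neg (by omega), if_neg (by omega),
        if_pos (by omega)]
    have e2 : cyc D i j (m + 1) = vtxII D j i (m - A - B - 1 + 1) := by
      unfold cyc; rw [if_neg (by omega), if_neg (by omega), if_neg (by omega),
        if_pos (by omega)]
      congr 1; omega
    rw [e1, e2]
    exact arc_II_succ D (by omega) (by omega)
  rcases Nat.eq_or_lt_of_le hr5 with hr6 | hr6
  · -- m = A + B + C, C ≥ 1: second bridge to path i
    have hCpos : 1 ≤ C := by omega
    have e1 : cyc D i j m = vtxII D j i (C - 1) := by
      unfold cyc; rw [if_neg (by omega), if_neg (by omega), if_neg (by omega),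
        if_pos (by omega)]
      congr 1; omega
    have e2 : cyc D i j (m + 1) = vtxI D i (D.q j i - 1) := by
      unfold cyc; rw [if_neg (by omega), if_neg (by omega), if_neg (by omega),
        if_neg (by omega)]
      congr 1; omega
    rw [e1, e2]
    exact arc_II_to_I D hCpos
  · -- A+B+C < m, m+1 ≤ clen : inside path i
    have e1 : cyc D i j m = vtxI D i (D.q j i - 1 + (m - A - B - C - 1)) := by
      unfold cyc; rw [if_neg (by omega), if_neg (by omega), if_neg (by omega),
        if_neg (by omega)]
    have e2 : cyc D i j (m + 1) = vtxI D i (D.q j i - 1 + (m - A - B - C - 1) + 1) := by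
      unfold cyc; rw [if_neg (by omega), if_neg (by omega), if_neg (by omega),
        if_neg (by omega)]
      congr 1; omega
    rw [e1, e2]
    exact arc_I_succ D (by omega)

lemma chain'_range'_map {α : Type*} (r : α → α → Prop) (f : ℕ → α) :
    ∀ (n s : ℕ), (∀ m, s ≤ m → m + 1 < s + n → r (f m) (f (m + 1))) →
      List.Chain' r ((List.range' s n).map f) := by
  intro n
  induction n with
  | zero => intro s _; exact List.isChain_nil
  | succ n ih =>
    intro s h
    rw [List.range'_succ, List.map_cons]
    refine List.isChain_cons.2 ⟨?_, ih (s + 1) fun m hm hm2 => h m (by omega) (by omega)⟩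
    intro y hy
    cases n with
    | zero => simp at hy
    | succ n =>
      rw [List.range'_succ, List.map_cons] at hy
      simp only [List.head?_cons, Option.mem_def, Option.some.injEq] at hy
      rw [← hy]
      exact h s le_rfl (by omega)

/-- The canonical closed walk avoiding everything tagged outside `{i, j}`. -/
lemma exists_cycle (i j : Fin k) (hij : i ≠ j) :
    ∃ (v : D.Vtx) (l : List D.Vtx),
      tag D v = i ∧ (∀ u ∈ l, tag D u = i ∨ tag D u = j) ∧ D.IsClosedWalk v l := by
  set N := clen D i j with hN
  have hN2 : 2 ≤ N := by
    have hn1j := D.hn1 j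
    have : N = clen D i j := hN
    unfold clen at this
    omega
  refine ⟨cyc D i j 0, (List.range' 1 (N - 1)).map (cyc D i j), ?_, ?_, ?_⟩
  · rw [cyc_zero]; rfl
  · intro u hu
    simp only [List.mem_map] at hu
    obtain ⟨m, _, rfl⟩ := hu
    exact cyc_tag D i j m
  · unfold IsClosedWalk
    have hlast : ([cyc D i j 0] : List D.Vtx) = [cyc D i j N] := by
      rw [cyc_zero, cyc_last]
    rw [hlast]
    have hsplit : (List.range' 1 (N - 1)).map (cyc D i j) ++ [cyc D i j N] =
        (List.range' 1 N).map (cyc D i j) := by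
      conv_rhs => rw [show N = (N - 1) + 1 by omega, List.range'_concat]
      rw [List.map_append, List.map_singleton]
      congr 3
      omega
    rw [hsplit]
    have hchain := chain'_range'_map D.Arc (cyc D i j) (N + 1) 0
      (fun m _ hm2 => cyc_step D i j hij (by omega))
    rw [show List.range' 0 (N + 1) = 0 :: List.range' 1 N from List.range'_succ .., 
      List.map_cons] at hchain
    exact hchain

end ICCAux

/-- For an ICC digraph with `k ≥ 2` Type-I paths, removing any set
of at most `k - 2` vertices leaves a directed cycle; consequently
`MAIS(D) ≤ n - (k - 1)`. -/
theorem stmt7 {k : ℕ} (hk : 2 ≤ k) (D : ICCDigraph k) :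
    (∀ R : Finset D.Vtx, R.card ≤ k - 2 →
      ∃ (v : D.Vtx) (l : List D.Vtx),
        v ∉ R ∧ (∀ u ∈ l, u ∉ R) ∧ D.IsClosedWalk v l) ∧
    D.mais ≤ Fintype.card D.Vtx - (k - 1) := by
  classical
  have key : ∀ R : Finset D.Vtx, R.card ≤ k - 2 →
      ∃ (v : D.Vtx) (l : List D.Vtx),
        v ∉ R ∧ (∀ u ∈ l, u ∉ R) ∧ D.IsClosedWalk v l := by
    intro R hR
    have himg : (R.image (ICCAux.tag D)).card ≤ k - 2 :=
      le_trans Finset.card_image_le hR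
    have hcard : 1 < (Finset.univ \ R.image (ICCAux.tag D)).card := by
      have h1 : (Finset.univ \ R.image (ICCAux.tag D)).card =
          Fintype.card (Fin k) - (R.image (ICCAux.tag D)).card := by
        rw [Finset.card_sdiff_of_subset (Finset.subset_univ _), Finset.card_univ]
      rw [h1, Fintype.card_fin]
      omega
    obtain ⟨i, hi, j, hj, hij⟩ := Finset.one_lt_card.1 hcard
    obtain ⟨v, l, hv, hl, hw⟩ := ICCAux.exists_cycle D i j hij
    refine ⟨v, l, ?_, ?_, hw⟩
    · intro hvR
      have hmem : ICCAux.tag D v ∈ R.image (ICCAux.tag D) :=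
        Finset.mem_image_of_mem _ hvR
      rw [hv] at hmem
      exact (Finset.mem_sdiff.1 hi).2 hmem
    · intro u hu huR
      have hmem : ICCAux.tag D u ∈ R.image (ICCAux.tag D) :=
        Finset.mem_image_of_mem _ huR
      rcases hl u hu with h | h <;> rw [h] at hmem
      · exact (Finset.mem_sdiff.1 hi).2 hmem
      · exact (Finset.mem_sdiff.1 hj).2 hmem
  refine ⟨key, ?_⟩
  unfold ICCDigraph.mais
  apply Finset.sup_le
  intro S hS
  rw [Finset.mem_filter] at hS
  have hAc : D.AcyclicOn S := hS.2
  by_contra hcon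
  push_neg at hcon
  have hle : S.card ≤ Fintype.card D.Vtx := Finset.card_le_univ S
  have hcompl : (Finset.univ \ S).card ≤ k - 2 := by
    rw [Finset.card_sdiff_of_subset (Finset.subset_univ _), Finset.card_univ]
    omega
  obtain ⟨v, l, hv, hl, hw⟩ := key _ hcompl
  refine hAc ⟨v, l, ?_, ?_, hw⟩
  · simpa [Finset.mem_sdiff] using hv
  · intro u hu
    have := hl u hu
    simpa [Finset.mem_sdiff] using this
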